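/- Let 𝓕 be the free associative ℂ(t)-algebra on a finite set of generators y_i, graded by assigning to each y_i a positive integer degree (so the degree-n component 𝓕_n is the ℂ(t)-span of the words of total weight n). Let B be a finite set of homogeneous elements of 𝓕 all of whose coordinates with respect to the basis of words are rational functions regular at t=0, and let B_0 be the set of their entrywise evaluations at t=0 (regarded again as elements of 𝓕). Then for every n ≥ 0, dim_{ℂ(t)} ⟨B⟩_n ≥ dim_{ℂ(t)} ⟨B_0⟩_n, where ⟨S⟩_n denotes the degree-n homogeneous component of the two-sided ideal of 𝓕 generated by S. -/

import Mathlib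

noncomputable section

/-- The field `ℂ(t)` of rational functions. -/
abbrev Kt := RatFunc ℂ

/-- A rational function `f ∈ ℂ(t)` is regular at `t = 0` (has no pole at `0`). -/
def RegularAtZero (f : Kt) : Prop := Polynomial.eval 0 f.denom ≠ 0

/-- The evaluation of a rational function at `t = 0`, regarded again as a (constant)
element of `ℂ(t)`. -/
def evalZero (f : Kt) : Kt := RatFunc.C (RatFunc.eval (RingHom.id ℂ) 0 f)

/-- The total weight of a word, for the given degrees of the generators. -/
def wordWeight {N : ℕ} (d : Fin N → ℕ) (w : FreeMonoid (Fin N)) : ℕ :=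
  (w.toList.map d).sum

/-- The degree-`n` homogeneous component of the free algebra, for the grading in which the
generator `y_i` has degree `d i`: the span of the words of total weight `n`. -/
def homComponent {N : ℕ} (d : Fin N → ℕ) (n : ℕ) : Submodule Kt (FreeAlgebra Kt (Fin N)) :=
  Submodule.span Kt
    ((FreeAlgebra.basisFreeMonoid Kt (Fin N)) '' { w | wordWeight d w = n })

/-- The two-sided ideal of the free algebra generated by a set `S`, as a `ℂ(t)`-submodule:
the span of all elements `x * r * y` with `r ∈ S`. -/
def twoSidedSpan {N : ℕ} (S : Set (FreeAlgebra Kt (Fin N))) :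
    Submodule Kt (FreeAlgebra Kt (Fin N)) :=
  Submodule.span Kt { z | ∃ x r y, r ∈ S ∧ z = x * r * y }

namespace SpecAux


open Polynomial

/-- evaluation at 0, landing in ℂ -/
def ev0 (f : Kt) : ℂ := RatFunc.eval (RingHom.id ℂ) 0 f

lemma evalZero_eq (f : Kt) : evalZero f = RatFunc.C (ev0 f) := rfl

lemma reg_iff (f : Kt) : RegularAtZero f ↔ Polynomial.eval₂ (RingHom.id ℂ) 0 f.denom ≠ 0 :=
  Iff.rfl

lemma reg_add {f g : Kt} (hf : RegularAtZero f) (hg : RegularAtZero g) :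
    RegularAtZero (f + g) := by
  have h : Polynomial.eval 0 ((f+g).denom) ∣ Polynomial.eval 0 f.denom * Polynomial.eval 0 g.denom := by
    simpa using map_dvd (Polynomial.evalRingHom (0:ℂ)) (RatFunc.denom_add_dvd f g)
  exact fun h0 => (mul_ne_zero hf hg) (eq_zero_of_zero_dvd (by rwa [h0] at h))

lemma reg_mul {f g : Kt} (hf : RegularAtZero f) (hg : RegularAtZero g) :
    RegularAtZero (f * g) := by
  have h : Polynomial.eval 0 ((f*g).denom) ∣ Polynomial.eval 0 f.denom * Polynomial.eval 0 g.denom := by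
    simpa using map_dvd (Polynomial.evalRingHom (0:ℂ)) (RatFunc.denom_mul_dvd f g)
  exact fun h0 => (mul_ne_zero hf hg) (eq_zero_of_zero_dvd (by rwa [h0] at h))

lemma ev0_add {f g : Kt} (hf : RegularAtZero f) (hg : RegularAtZero g) :
    ev0 (f + g) = ev0 f + ev0 g :=
  RatFunc.eval_add (hx := (reg_iff f).1 hf) (hy := (reg_iff g).1 hg)

lemma ev0_mul {f g : Kt} (hf : RegularAtZero f) (hg : RegularAtZero g) :
    ev0 (f * g) = ev0 f * ev0 g :=
  RatFunc.eval_mul (hx := (reg_iff f).1 hf) (hy := (reg_iff g).1 hg)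

lemma reg_zero : RegularAtZero 0 := by
  rw [RegularAtZero, RatFunc.denom_zero]; simp

lemma ev0_zero : ev0 0 = 0 := RatFunc.eval_zero _ _

lemma evalZero_zero : evalZero 0 = 0 := by rw [evalZero_eq, ev0_zero, map_zero]

lemma reg_algebraMap (p : ℂ[X]) : RegularAtZero (algebraMap ℂ[X] Kt p) := by
  rw [RegularAtZero, RatFunc.denom_algebraMap]; simp

lemma ev0_algebraMap (p : ℂ[X]) : ev0 (algebraMap ℂ[X] Kt p) = p.eval 0 := by
  rw [ev0, RatFunc.eval_algebraMap]
  simp [Polynomial.coeff_zero_eq_eval_zero]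

lemma reg_sum {α : Type*} (s : Finset α) (f : α → Kt) (h : ∀ a ∈ s, RegularAtZero (f a)) :
    RegularAtZero (∑ a ∈ s, f a) ∧ ev0 (∑ a ∈ s, f a) = ∑ a ∈ s, ev0 (f a) := by
  classical
  induction s using Finset.induction_on with
  | empty => simp [reg_zero, ev0_zero]
  | insert a s hx ih =>
    have h1 : RegularAtZero (f a) := h a (Finset.mem_insert_self a s)
    have ih' := ih (fun x hxs => h x (Finset.mem_insert_of_mem hxs))
    rw [Finset.sum_insert hx, Finset.sum_insert hx]
    exact ⟨reg_add h1 ih'.1, by rw [ev0_add h1 ih'.1, ih'.2]⟩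


end SpecAux

open Polynomial Module Submodule Set

namespace SpecAux

/-- Key normalization: a nonzero family of rational functions can be scaled by a nonzero
element so that all entries become regular at 0 and some entry has nonzero value at 0. -/
lemma exists_scaling {σ : Type*} [Fintype σ] [Nonempty σ] (g : σ → Kt) {x0 : σ} (hx0 : g x0 ≠ 0) :
    ∃ w : Kt, w ≠ 0 ∧ (∀ x, RegularAtZero (w * g x)) ∧ ∃ x1, ev0 (w * g x1) ≠ 0 := by
  classical
  set Q : ℂ[X] := ∏ x : σ, (g x).denom with hQ
  have hQ0 : Q ≠ 0 := Finset.prod_ne_zero_iff.2 fun x _ => RatFunc.denom_ne_zero _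
  -- polynomials P x with algebraMap (P x) = g x * algebraMap Q
  have hP : ∀ x : σ, ∃ P : ℂ[X], algebraMap ℂ[X] Kt P = g x * algebraMap ℂ[X] Kt Q := by
    intro x
    obtain ⟨q, hq⟩ : (g x).denom ∣ Q := Finset.dvd_prod_of_mem _ (Finset.mem_univ x)
    refine ⟨(g x).num * q, ?_⟩
    have hnum : g x * algebraMap ℂ[X] Kt ((g x).denom) = algebraMap ℂ[X] Kt ((g x).num) := by
      rw [eq_comm, ← div_eq_iff (RatFunc.algebraMap_ne_zero (RatFunc.denom_ne_zero (g x)))]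
      exact RatFunc.num_div_denom _
    rw [hq, map_mul, map_mul, ← mul_assoc, hnum]
  choose P hPspec using hP
  have hPx0 : P x0 ≠ 0 := by
    intro h
    apply hx0
    have := hPspec x0
    rw [h, map_zero] at this
    exact (mul_eq_zero.1 this.symm).resolve_right (RatFunc.algebraMap_ne_zero hQ0)
  -- minimal multiplicity of the root 0 among the nonzero P x
  set S : Finset σ := Finset.univ.filter (fun x => P x ≠ 0) with hS
  have hSne : S.Nonempty := ⟨x0, by simp [hS, hPx0]⟩
  obtain ⟨x1, hx1S, hx1min⟩ := Finset.exists_mem_eq_inf' hSne (fun x => rootMultiplicity 0 (P x))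
  set v : ℕ := S.inf' hSne (fun x => rootMultiplicity 0 (P x)) with hv
  have hdvd : ∀ x, (X : ℂ[X]) ^ v ∣ P x := by
    intro x
    by_cases hPx : P x = 0
    · simp [hPx]
    · have hxS : x ∈ S := by simp [hS, hPx]
      have hle : v ≤ rootMultiplicity 0 (P x) := Finset.inf'_le _ hxS
      have := pow_rootMultiplicity_dvd (P x) 0
      simp only [map_zero, sub_zero] at this
      exact dvd_trans (pow_dvd_pow _ hle) this
  choose P' hP' using hdvd
  have hP'x1 : (P' x1).eval 0 ≠ 0 := by
    intro h0
    have hdvdX : (X : ℂ[X]) ∣ P' x1 := by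
      have := dvd_iff_isRoot.2 h0
      rwa [map_zero, sub_zero] at this
    have : (X : ℂ[X]) ^ (v + 1) ∣ P x1 := by
      obtain ⟨q, hq⟩ := hdvdX
      exact ⟨q, by rw [hP' x1, hq, pow_succ, mul_assoc]⟩
    have hPx1 : P x1 ≠ 0 := by simpa [hS] using hx1S
    have hle := (le_rootMultiplicity_iff hPx1 (a := 0)).2 (by simpa using this)
    rw [← hx1min] at hle
    omega
  refine ⟨algebraMap ℂ[X] Kt Q / algebraMap ℂ[X] Kt (X ^ v), ?_, ?_, ⟨x1, ?_⟩⟩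
  · exact div_ne_zero (RatFunc.algebraMap_ne_zero hQ0)
      (RatFunc.algebraMap_ne_zero (pow_ne_zero _ X_ne_zero))
  all_goals {
    have key : ∀ x, algebraMap ℂ[X] Kt Q / algebraMap ℂ[X] Kt (X ^ v) * g x
        = algebraMap ℂ[X] Kt (P' x) := by
      intro x
      have hXv : algebraMap ℂ[X] Kt (X ^ v) ≠ 0 :=
        RatFunc.algebraMap_ne_zero (pow_ne_zero _ X_ne_zero)
      rw [div_mul_eq_mul_div, eq_comm, eq_div_iff hXv, mul_comm (algebraMap ℂ[X] Kt Q) (g x),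
        ← hPspec x, ← map_mul]
      congr 1
      rw [hP' x]; ring
    first
    | exact fun x => by rw [key x]; exact reg_algebraMap _
    | (rw [key x1, ev0_algebraMap]; exact hP'x1)
  }

lemma specialize_finrank {κ M : Type*} [AddCommGroup M] [Module Kt M]
    (B : Basis κ Kt M) {σ : Type*} [Fintype σ] (u u₀ : σ → M)
    (hreg : ∀ j w, RegularAtZero (B.repr (u j) w))
    (h0 : ∀ j w, B.repr (u₀ j) w = evalZero (B.repr (u j) w)) :
    finrank Kt (span Kt (range u₀)) ≤ finrank Kt (span Kt (range u)) := by
  classical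
  obtain ⟨tset, hsub, hspan, hind⟩ := exists_linearIndependent Kt (range u₀)
  have htfin : tset.Finite := (finite_range u₀).subset hsub
  letI : Fintype tset := htfin.fintype
  have hcard : finrank Kt (span Kt (range u₀)) = tset.toFinset.card := by
    rw [← hspan]; exact finrank_span_set_eq_card hind
  have hJ : ∀ x : tset, ∃ j : σ, u₀ j = (x : M) := fun x => hsub x.2
  choose J hJspec using hJ
  -- u ∘ J is linearly independent
  have hindu : LinearIndependent Kt (fun x : tset => u (J x)) := by
    rw [Fintype.linearIndependent_iff]
    intro g hg
    by_contra hne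
    push_neg at hne
    obtain ⟨x0, hx0⟩ := hne
    haveI : Nonempty tset := ⟨x0⟩
    obtain ⟨w, hw0, hwreg, x1, hx1⟩ := exists_scaling g hx0
    -- scaled relation
    have hrel : ∑ x : tset, (w * g x) • u (J x) = 0 := by
      have := congrArg (fun z => w • z) hg
      simpa [Finset.smul_sum, smul_smul] using this
    -- coordinates of the scaled relation
    have hcoord : ∀ k : κ, ∑ x : tset, (w * g x) * (B.repr (u (J x)) k) = 0 := by
      intro k
      have := congrArg (fun z => B.repr z k) hrel
      simpa [map_sum, Finsupp.smul_apply, smul_eq_mul] using this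
    -- evaluate at 0
    have hev : ∀ k : κ, ∑ x : tset, ev0 (w * g x) * ev0 (B.repr (u (J x)) k) = 0 := by
      intro k
      have hregterm : ∀ x ∈ Finset.univ, RegularAtZero ((w * g x) * (B.repr (u (J x)) k)) :=
        fun x _ => reg_mul (hwreg x) (hreg (J x) k)
      have hsum := reg_sum Finset.univ _ hregterm
      rw [hcoord k, ev0_zero] at hsum
      calc ∑ x : tset, ev0 (w * g x) * ev0 (B.repr (u (J x)) k)
          = ∑ x : tset, ev0 ((w * g x) * (B.repr (u (J x)) k)) :=
            Finset.sum_congr rfl (fun x _ => (ev0_mul (hwreg x) (hreg (J x) k)).symm)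
        _ = 0 := hsum.2.symm
    -- build a relation for u₀ ∘ J = the inclusion of tset
    have hrel0 : ∑ x : tset, (RatFunc.C (ev0 (w * g x))) • (x : M) = 0 := by
      apply B.repr.injective
      rw [map_zero]
      ext k
      have : (B.repr (∑ x : tset, (RatFunc.C (ev0 (w * g x))) • (x : M))) k
          = ∑ x : tset, RatFunc.C (ev0 (w * g x)) * (B.repr (u₀ (J x)) k) := by
        simp [map_sum, Finsupp.smul_apply, smul_eq_mul, hJspec]
      rw [this]
      have : ∀ x : tset, RatFunc.C (ev0 (w * g x)) * (B.repr (u₀ (J x)) k)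
          = RatFunc.C (ev0 (w * g x) * ev0 (B.repr (u (J x)) k)) := by
        intro x
        rw [h0, evalZero_eq, ← map_mul]
      simp only [this, ← map_sum, hev k, map_zero, Finsupp.coe_zero, Pi.zero_apply]
    have := Fintype.linearIndependent_iff.1 hind _ hrel0 x1
    exact hx1 (by simpa using congrArg (RatFunc.eval (RingHom.id ℂ) 0) this)
  -- conclude
  haveI : FiniteDimensional Kt (span Kt (range u)) :=
    FiniteDimensional.span_of_finite Kt (finite_range u)
  have hle : span Kt (range fun x : tset => u (J x)) ≤ span Kt (range u) :=
    span_mono (range_subset_iff.2 fun x => mem_range_self _)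
  calc finrank Kt (span Kt (range u₀)) = tset.toFinset.card := hcard
    _ = Fintype.card tset := Set.toFinset_card _
    _ = finrank Kt (span Kt (range fun x : tset => u (J x))) := (finrank_span_eq_card hindu).symm
    _ ≤ finrank Kt (span Kt (range u)) := Submodule.finrank_mono hle

end SpecAux

namespace SpecAux

open Polynomial Module Submodule Set

variable {N : ℕ}

local notation "FB" => FreeAlgebra.basisFreeMonoid Kt (Fin N)

lemma basis_mul (w w' : FreeMonoid (Fin N)) : FB w * FB w' = FB (w * w') := by
  have h : ∀ u : FreeMonoid (Fin N), FB u
      = (FreeAlgebra.equivMonoidAlgebraFreeMonoid (R := Kt) (X := Fin N)).symm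
          (MonoidAlgebra.single u 1) := fun u => rfl
  rw [h w, h w', h (w * w'), ← map_mul, MonoidAlgebra.single_mul_single, one_mul]

lemma wordWeight_mul (d : Fin N → ℕ) (w w' : FreeMonoid (Fin N)) :
    wordWeight d (w * w') = wordWeight d w + wordWeight d w' := by
  simp [wordWeight, FreeMonoid.toList_mul]

lemma basis_mem_hom (d : Fin N → ℕ) (w : FreeMonoid (Fin N)) :
    FB w ∈ homComponent d (wordWeight d w) :=
  subset_span ⟨w, rfl, rfl⟩

lemma hom_mul (d : Fin N → ℕ) {k l : ℕ} {x y : FreeAlgebra Kt (Fin N)}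
    (hx : x ∈ homComponent d k) (hy : y ∈ homComponent d l) :
    x * y ∈ homComponent d (k + l) := by
  rw [homComponent] at hx hy ⊢
  have h := Submodule.mul_mem_mul hx hy
  rw [Submodule.span_mul_span] at h
  refine span_le.2 ?_ h
  rintro z ⟨a, ⟨w, hw, rfl⟩, c, ⟨w', hw', rfl⟩, rfl⟩
  show FB w * FB w' ∈ _
  rw [basis_mul]
  refine subset_span ⟨w * w', ?_, rfl⟩
  simp only [mem_setOf_eq] at hw hw' ⊢
  rw [wordWeight_mul, hw, hw']

open Classical in
lemma repr_sandwich (x : FreeAlgebra Kt (Fin N)) (w w' m : FreeMonoid (Fin N)) :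
    (FB).repr (FB w * x * FB w') m
      = if h : ∃ u, m = w * u * w' then (FB).repr x h.choose else 0 := by
  have key : ∀ z : FreeMonoid (Fin N),
      (FB).repr (FB w * FB z * FB w') m
        = if h : ∃ u, m = w * u * w' then (FB).repr (FB z) h.choose else 0 := by
    intro z
    rw [basis_mul, basis_mul, Basis.repr_self]
    by_cases h : ∃ u, m = w * u * w'
    · rw [dif_pos h, Basis.repr_self, Finsupp.single_apply, Finsupp.single_apply]
      have hiff : (w * z * w' = m) ↔ (z = h.choose) := by
        constructor
        · intro hz
          exact mul_left_cancel (mul_right_cancel (hz.trans h.choose_spec))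
        · rintro rfl; exact h.choose_spec.symm
      simp only [hiff]
    · rw [dif_neg h, Finsupp.single_apply, if_neg]
      intro hz
      exact h ⟨z, hz.symm⟩
  let L1 : FreeAlgebra Kt (Fin N) →ₗ[Kt] Kt :=
    (Finsupp.lapply m).comp
      (((FB).repr : FreeAlgebra Kt (Fin N) →ₗ[Kt] (FreeMonoid (Fin N) →₀ Kt)).comp
        ((LinearMap.mulRight Kt (FB w')).comp (LinearMap.mulLeft Kt (FB w))))
  let L2 : FreeAlgebra Kt (Fin N) →ₗ[Kt] Kt :=
    if h : ∃ u, m = w * u * w' then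
      (Finsupp.lapply h.choose).comp
        ((FB).repr : FreeAlgebra Kt (Fin N) →ₗ[Kt] (FreeMonoid (Fin N) →₀ Kt))
    else 0
  have hkey : L1 = L2 := by
    apply Basis.ext FB
    intro z
    show (FB).repr (FB w * FB z * FB w') m = _
    rw [key z]
    by_cases h : ∃ u, m = w * u * w'
    · simp only [L2, dif_pos h]; rfl
    · simp only [L2, dif_neg h]; rfl
  have hx := congrArg (fun L : FreeAlgebra Kt (Fin N) →ₗ[Kt] Kt => L x) hkey
  simp only [L1, L2] at hx
  by_cases h : ∃ u, m = w * u * w'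
  · rw [dif_pos h]
    rw [dif_pos h] at hx
    exact hx
  · rw [dif_neg h]
    rw [dif_neg h] at hx
    exact hx

end SpecAux

namespace SpecAux

open Polynomial Module Submodule Set

lemma wordWeight_finite {N : ℕ} (d : Fin N → ℕ) (hd : ∀ i, 0 < d i) (K : ℕ) :
    {w : FreeMonoid (Fin N) | wordWeight d w ≤ K}.Finite := by
  have hsub : {w : FreeMonoid (Fin N) | wordWeight d w ≤ K}
      ⊆ FreeMonoid.toList ⁻¹' {l : List (Fin N) | l.length ≤ K} := by
    intro w hw
    simp only [mem_preimage, mem_setOf_eq]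
    have h2 : ((FreeMonoid.toList w).map d).length ≤ ((FreeMonoid.toList w).map d).sum :=
      List.length_le_sum_of_one_le _ (by
        rintro i hi
        obtain ⟨a, _, rfl⟩ := List.mem_map.1 hi
        exact hd a)
    rw [List.length_map] at h2
    exact h2.trans hw
  exact (Set.Finite.preimage (FreeMonoid.toList.injective.injOn)
    (List.finite_length_le (Fin N) K)).subset hsub

lemma main {N m : ℕ}
    (d : Fin N → ℕ) (hd : ∀ i, 0 < d i)
    (b b₀ : Fin m → FreeAlgebra Kt (Fin N))
    (hhom : ∀ i, ∃ n, b i ∈ homComponent d n)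
    (hreg : ∀ (i : Fin m) (w : FreeMonoid (Fin N)),
      RegularAtZero ((FreeAlgebra.basisFreeMonoid Kt (Fin N)).repr (b i) w))
    (hb₀ : ∀ (i : Fin m) (w : FreeMonoid (Fin N)),
      (FreeAlgebra.basisFreeMonoid Kt (Fin N)).repr (b₀ i) w
        = evalZero ((FreeAlgebra.basisFreeMonoid Kt (Fin N)).repr (b i) w))
    (n : ℕ) :
    Module.finrank Kt ↥(twoSidedSpan (Set.range b₀) ⊓ homComponent d n)
      ≤ Module.finrank Kt ↥(twoSidedSpan (Set.range b) ⊓ homComponent d n) := by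
  classical
  let nd : Fin m → ℕ := fun i => (hhom i).choose
  have hnd : ∀ i, b i ∈ homComponent d (nd i) := fun i => (hhom i).choose_spec
  have hsupp : ∀ i, ↑((FreeAlgebra.basisFreeMonoid Kt (Fin N)).repr (b₀ i)).support
      ⊆ {w | wordWeight d w = nd i} := by
    intro i
    have hb : ↑((FreeAlgebra.basisFreeMonoid Kt (Fin N)).repr (b i)).support
        ⊆ {w | wordWeight d w = nd i} :=
      (FreeAlgebra.basisFreeMonoid Kt (Fin N)).repr_support_subset_of_mem_span _
        (by simpa only [homComponent] using hnd i)
    intro w hw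
    apply hb
    simp only [Finset.mem_coe, Finsupp.mem_support_iff] at hw ⊢
    intro h0
    apply hw
    rw [hb₀ i w, h0, evalZero_zero]
  have hnd0 : ∀ i, b₀ i ∈ homComponent d (nd i) := fun i => by
    simp only [homComponent]
    exact (FreeAlgebra.basisFreeMonoid Kt (Fin N)).mem_span_image.2 (hsupp i)
  -- the finite index type of triples of total weight n
  let T : Set (Fin m × FreeMonoid (Fin N) × FreeMonoid (Fin N)) :=
    {p | wordWeight d p.2.1 + nd p.1 + wordWeight d p.2.2 = n}
  have hTfin : T.Finite := by
    apply Set.Finite.subset (Set.finite_univ.prod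
      ((wordWeight_finite d hd n).prod (wordWeight_finite d hd n)))
    rintro ⟨i, w, w'⟩ hp
    simp only [T, mem_setOf_eq] at hp
    refine ⟨mem_univ _, ?_, ?_⟩ <;> simp only [mem_setOf_eq] <;> omega
  letI : Fintype ↥T := hTfin.fintype
  let v : ↥T → FreeAlgebra Kt (Fin N) := fun p =>
    (FreeAlgebra.basisFreeMonoid Kt (Fin N)) p.1.2.1 * b p.1.1 * (FreeAlgebra.basisFreeMonoid Kt (Fin N)) p.1.2.2
  let v₀ : ↥T → FreeAlgebra Kt (Fin N) := fun p =>
    (FreeAlgebra.basisFreeMonoid Kt (Fin N)) p.1.2.1 * b₀ p.1.1 * (FreeAlgebra.basisFreeMonoid Kt (Fin N)) p.1.2.2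
  -- homogeneity of the sandwich elements
  have hvhom : ∀ (bb : Fin m → FreeAlgebra Kt (Fin N)),
      (∀ i, bb i ∈ homComponent d (nd i)) → ∀ p : ↥T,
      (FreeAlgebra.basisFreeMonoid Kt (Fin N)) p.1.2.1 * bb p.1.1 * (FreeAlgebra.basisFreeMonoid Kt (Fin N)) p.1.2.2 ∈ homComponent d n := by
    intro bb hbb p
    have h1 := hom_mul d (hom_mul d (basis_mem_hom d p.1.2.1) (hbb p.1.1))
      (basis_mem_hom d p.1.2.2)
    have h2 := p.2
    simp only [T, mem_setOf_eq] at h2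
    rwa [h2] at h1
  have claim1 : Submodule.span Kt (Set.range v)
      ≤ twoSidedSpan (Set.range b) ⊓ homComponent d n := by
    rw [Submodule.span_le]
    rintro _ ⟨p, rfl⟩
    exact ⟨Submodule.subset_span ⟨(FreeAlgebra.basisFreeMonoid Kt (Fin N)) p.1.2.1, b p.1.1, (FreeAlgebra.basisFreeMonoid Kt (Fin N)) p.1.2.2, ⟨p.1.1, rfl⟩, rfl⟩,
      hvhom b hnd p⟩
  have hv0hom : Submodule.span Kt (Set.range v₀) ≤ homComponent d n := by
    rw [Submodule.span_le]
    rintro _ ⟨p, rfl⟩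
    exact hvhom b₀ hnd0 p
  have claim2 : twoSidedSpan (Set.range b₀) ⊓ homComponent d n
      ≤ Submodule.span Kt (Set.range v₀) := by
    have stepa : twoSidedSpan (Set.range b₀)
        ≤ Submodule.span Kt (Set.range v₀)
          ⊔ Submodule.span Kt (⇑(FreeAlgebra.basisFreeMonoid Kt (Fin N)) '' {w | wordWeight d w ≠ n}) := by
      rw [twoSidedSpan, Submodule.span_le]
      rintro z ⟨x, r, y, ⟨i, rfl⟩, rfl⟩
      have hx : x ∈ Submodule.span Kt (Set.range ⇑(FreeAlgebra.basisFreeMonoid Kt (Fin N))) := by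
        rw [Basis.span_eq]; exact Submodule.mem_top
      have hy : y ∈ Submodule.span Kt (Set.range ⇑(FreeAlgebra.basisFreeMonoid Kt (Fin N))) := by
        rw [Basis.span_eq]; exact Submodule.mem_top
      have hmem : x * b₀ i * y ∈
          (Submodule.span Kt (Set.range ⇑(FreeAlgebra.basisFreeMonoid Kt (Fin N))) * Submodule.span Kt {b₀ i})
            * Submodule.span Kt (Set.range ⇑(FreeAlgebra.basisFreeMonoid Kt (Fin N))) :=
        Submodule.mul_mem_mul
          (Submodule.mul_mem_mul hx (Submodule.mem_span_singleton_self _)) hy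
      rw [Submodule.span_mul_span, Submodule.span_mul_span] at hmem
      refine Submodule.span_le.2 ?_ hmem
      rintro _ ⟨_, ⟨_, ⟨w, rfl⟩, _, rfl, rfl⟩, _, ⟨w', rfl⟩, rfl⟩
      by_cases hwt : wordWeight d w + nd i + wordWeight d w' = n
      · exact Submodule.mem_sup_left (Submodule.subset_span ⟨⟨(i, w, w'), hwt⟩, rfl⟩)
      · apply Submodule.mem_sup_right
        have h1 := hom_mul d (hom_mul d (basis_mem_hom d w) (hnd0 i)) (basis_mem_hom d w')
        simp only [homComponent] at h1
        refine Submodule.span_mono ?_ h1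
        rintro _ ⟨u, hu, rfl⟩
        refine ⟨u, ?_, rfl⟩
        simp only [mem_setOf_eq] at hu ⊢
        omega
    rintro z ⟨hz1, hz2⟩
    obtain ⟨a, ha, c, hc, rfl⟩ := Submodule.mem_sup.1 (stepa hz1)
    have hahom : a ∈ homComponent d n := hv0hom ha
    have hchom : c ∈ homComponent d n := by
      have h3 : (a + c) - a ∈ homComponent d n := Submodule.sub_mem _ hz2 hahom
      simpa using h3
    have hdis : Disjoint (Submodule.span Kt (⇑(FreeAlgebra.basisFreeMonoid Kt (Fin N)) '' {w | wordWeight d w = n}))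
        (Submodule.span Kt (⇑(FreeAlgebra.basisFreeMonoid Kt (Fin N)) '' {w | wordWeight d w ≠ n})) := by
      apply (FreeAlgebra.basisFreeMonoid Kt (Fin N)).linearIndependent.disjoint_span_image
      rw [Set.disjoint_left]
      intro w hw hw'
      exact hw' hw
    have hc0 : c = 0 := by
      have h4 := hdis.le_bot ⟨(by simpa only [homComponent] using hchom : c ∈ Submodule.span Kt _), hc⟩
      simpa using h4
    rw [hc0, add_zero]
    exact ha
  -- coordinates of the sandwich families
  have hregv : ∀ (p : ↥T) (k : FreeMonoid (Fin N)),
      RegularAtZero ((FreeAlgebra.basisFreeMonoid Kt (Fin N)).repr (v p) k) := by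
    intro p k
    show RegularAtZero ((FreeAlgebra.basisFreeMonoid Kt (Fin N)).repr
      ((FreeAlgebra.basisFreeMonoid Kt (Fin N)) p.1.2.1 * b p.1.1 * (FreeAlgebra.basisFreeMonoid Kt (Fin N)) p.1.2.2) k)
    rw [repr_sandwich]
    split
    · exact hreg _ _
    · exact reg_zero
  have hv0coord : ∀ (p : ↥T) (k : FreeMonoid (Fin N)),
      (FreeAlgebra.basisFreeMonoid Kt (Fin N)).repr (v₀ p) k
        = evalZero ((FreeAlgebra.basisFreeMonoid Kt (Fin N)).repr (v p) k) := by
    intro p k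
    show (FreeAlgebra.basisFreeMonoid Kt (Fin N)).repr
        ((FreeAlgebra.basisFreeMonoid Kt (Fin N)) p.1.2.1 * b₀ p.1.1 * (FreeAlgebra.basisFreeMonoid Kt (Fin N)) p.1.2.2) k = evalZero
          ((FreeAlgebra.basisFreeMonoid Kt (Fin N)).repr ((FreeAlgebra.basisFreeMonoid Kt (Fin N)) p.1.2.1 * b p.1.1 * (FreeAlgebra.basisFreeMonoid Kt (Fin N)) p.1.2.2) k)
    rw [repr_sandwich, repr_sandwich]
    by_cases h : ∃ u, k = p.1.2.1 * u * p.1.2.2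
    · rw [dif_pos h, dif_pos h]
      exact hb₀ _ _
    · rw [dif_neg h, dif_neg h]
      exact evalZero_zero.symm
  -- conclusion
  haveI hfd1 : FiniteDimensional Kt (Submodule.span Kt (Set.range v₀)) :=
    FiniteDimensional.span_of_finite Kt (Set.finite_range v₀)
  haveI hfd2 : FiniteDimensional Kt (homComponent d n) := by
    simp only [homComponent]
    exact FiniteDimensional.span_of_finite Kt
      (((wordWeight_finite d hd n).subset (fun w hw => le_of_eq hw)).image _)
  haveI hfd3 : FiniteDimensional Kt ↥(twoSidedSpan (Set.range b) ⊓ homComponent d n) :=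
    Submodule.finiteDimensional_of_le inf_le_right
  calc Module.finrank Kt ↥(twoSidedSpan (Set.range b₀) ⊓ homComponent d n)
      ≤ Module.finrank Kt ↥(Submodule.span Kt (Set.range v₀)) :=
        Submodule.finrank_mono claim2
    _ ≤ Module.finrank Kt ↥(Submodule.span Kt (Set.range v)) :=
        specialize_finrank (FreeAlgebra.basisFreeMonoid Kt (Fin N)) v v₀ hregv hv0coord
    _ ≤ _ := Submodule.finrank_mono claim1

end SpecAux


/-- **Specialization of graded ideals in a free algebra.**
Let `𝓕` be the free algebra on finitely many generators `y_i` of positive degrees `d i`, let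
`b_1, …, b_m` be homogeneous elements whose coordinates (in the basis of words) are all regular
at `t = 0`, and let `b₀` be the family of their entrywise evaluations at `t = 0`.  Then for every
`n`, `dim ⟨b⟩_n ≥ dim ⟨b₀⟩_n`. -/
theorem graded_ideal_specialization {N m : ℕ}
    (d : Fin N → ℕ) (hd : ∀ i, 0 < d i)
    (b b₀ : Fin m → FreeAlgebra Kt (Fin N))
    (hhom : ∀ i, ∃ n, b i ∈ homComponent d n)
    (hreg : ∀ (i : Fin m) (w : FreeMonoid (Fin N)),
      RegularAtZero ((FreeAlgebra.basisFreeMonoid Kt (Fin N)).repr (b i) w))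
    (hb₀ : ∀ (i : Fin m) (w : FreeMonoid (Fin N)),
      (FreeAlgebra.basisFreeMonoid Kt (Fin N)).repr (b₀ i) w
        = evalZero ((FreeAlgebra.basisFreeMonoid Kt (Fin N)).repr (b i) w))
    (n : ℕ) :
    Module.finrank Kt ↥(twoSidedSpan (Set.range b₀) ⊓ homComponent d n)
      ≤ Module.finrank Kt ↥(twoSidedSpan (Set.range b) ⊓ homComponent d n) :=
  SpecAux.main d hd b b₀ hhom hreg hb₀ n

end
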